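/- For every integer r ≥ 1, the spectrum of the r×r Hermitian matrix Δ_{π/2}^r is exactly the set {2cos(πj/(2r)) : j ∈ ℤ, 0 ≤ j ≤ 2r, j odd}, and every eigenvalue of Δ_{π/2}^r is simple (the matrix has r distinct eigenvalues). -/

import Mathlib

/-- The r×r matrix Δ_θ^r: ones on the off-diagonals, with twisted corner entries
e^{-iθ} (top-right) and e^{iθ} (bottom-left).  For r = 1 this gives (2cos θ) and for
r = 2 it gives [[0, 1+e^{-iθ}],[1+e^{iθ}, 0]]. -/
noncomputable def deltaMatrix (r : ℕ) (θ : ℝ) : Matrix (Fin r) (Fin r) ℂ :=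
  Matrix.of fun j k =>
    (if (j : ℤ) - (k : ℤ) = 1 ∨ (k : ℤ) - (j : ℤ) = 1 then 1 else 0)
    + (if (j : ℕ) = 0 ∧ (k : ℕ) = r - 1 then Complex.exp (-(Complex.I * (θ : ℂ))) else 0)
    + (if (j : ℕ) = r - 1 ∧ (k : ℕ) = 0 then Complex.exp (Complex.I * (θ : ℂ)) else 0)

/-- The multiplicity of μ as an eigenvalue of M: the dimension of the eigenspace. -/
noncomputable def eigMult {n : Type*} [Fintype n] [DecidableEq n]
    (M : Matrix n n ℂ) (μ : ℂ) : ℕ :=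
  Module.finrank ℂ ↥(Module.End.eigenspace (Matrix.toLin' M) μ)

/- ---------------- auxiliary lemmas ---------------- -/

lemma sumIteZero {r : ℕ} (P : Fin r → Prop) [DecidablePred P] (f : Fin r → ℂ)
    (h : ∀ k, ¬ P k) : (∑ k : Fin r, if P k then f k else 0) = 0 :=
  Finset.sum_eq_zero fun k _ => if_neg (h k)

lemma sumIteSingle {r : ℕ} (P : Fin r → Prop) [DecidablePred P] (c ω : ℂ) (m : ℕ)
    (hm : m < r) (h : ∀ k, P k ↔ (k : ℕ) = m) :
    (∑ k : Fin r, if P k then c * ω ^ (k : ℕ) else 0) = c * ω ^ m := by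
  classical
  rw [Finset.sum_eq_single ⟨m, hm⟩]
  · rw [if_pos ((h _).mpr rfl)]
  · intro b _ hb
    refine if_neg fun hc => hb (Fin.ext ?_)
    exact (h b).mp hc
  · intro h'; exact absurd (Finset.mem_univ _) h'

lemma delta_mulVec (r : ℕ) (hr : 1 ≤ r) (θ : ℝ) (ω : ℂ)
    (hω : ω ^ r = Complex.exp (Complex.I * (θ : ℂ))) :
    (deltaMatrix r θ).mulVec (fun j : Fin r => ω ^ (j : ℕ)) =
      (ω + ω⁻¹) • (fun j : Fin r => ω ^ (j : ℕ)) := by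
  obtain ⟨m, rfl⟩ : ∃ m, r = m + 1 := ⟨r - 1, by omega⟩
  have hω0 : ω ≠ 0 := by
    intro h
    rw [h, zero_pow (by omega : m + 1 ≠ 0)] at hω
    exact (Complex.exp_ne_zero _) hω.symm
  funext j
  show (∑ k : Fin (m + 1), deltaMatrix (m + 1) θ j k * ω ^ (k : ℕ))
      = (ω + ω⁻¹) * ω ^ (j : ℕ)
  simp only [deltaMatrix, Matrix.of_apply]
  have hsplit : ∀ k : Fin (m + 1),
      (if (j : ℤ) - (k : ℤ) = 1 ∨ (k : ℤ) - (j : ℤ) = 1 then (1 : ℂ) else 0)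
      = (if (j : ℤ) - (k : ℤ) = 1 then (1 : ℂ) else 0)
        + (if (k : ℤ) - (j : ℤ) = 1 then (1 : ℂ) else 0) := by
    intro k
    by_cases h1 : (j : ℤ) - (k : ℤ) = 1
    · rw [if_pos (Or.inl h1), if_pos h1, if_neg (by omega), add_zero]
    · by_cases h2 : (k : ℤ) - (j : ℤ) = 1
      · rw [if_pos (Or.inr h2), if_neg h1, if_pos h2, zero_add]
      · rw [if_neg (by tauto), if_neg h1, if_neg h2, add_zero]
  simp only [hsplit, add_mul, ite_mul, zero_mul]
  rw [Finset.sum_add_distrib, Finset.sum_add_distrib, Finset.sum_add_distrib]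
  by_cases hj0 : (j : ℕ) = 0
  · by_cases hm0 : m = 0
    · -- r = 1, j = 0
      subst hm0
      rw [sumIteZero _ _ (fun k => by omega),
        sumIteZero _ _ (fun k => by omega),
        sumIteSingle _ _ _ 0 (by omega) (fun k => by omega),
        sumIteSingle _ _ _ 0 (by omega) (fun k => by omega), hj0]
      have hωe : ω = Complex.exp (Complex.I * (θ : ℂ)) := by simpa using hω
      rw [hωe, ← Complex.exp_neg]
      ring
    · -- j = 0, r ≥ 2
      rw [sumIteZero _ _ (fun k => by omega),
        sumIteSingle _ _ _ 1 (by omega) (fun k => by omega),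
        sumIteSingle _ _ _ m (by omega) (fun k => by omega),
        sumIteZero _ _ (fun k => by omega), hj0]
      have he : Complex.exp (-(Complex.I * (θ : ℂ))) = (ω ^ (m + 1))⁻¹ := by
        rw [hω, Complex.exp_neg]
      rw [he]
      field_simp
      ring
  · by_cases hjm : (j : ℕ) = m
    · -- j = r - 1 ≥ 1
      obtain ⟨l, rfl⟩ : ∃ l, m = l + 1 := ⟨m - 1, by omega⟩
      rw [sumIteSingle _ _ _ l (by omega) (fun k => by omega),
        sumIteZero _ _ (fun k => by omega),
        sumIteZero _ _ (fun k => by omega),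
        sumIteSingle _ _ _ 0 (by omega) (fun k => by omega), hjm, ← hω]
      field_simp
      ring
    · -- interior
      obtain ⟨l, hl⟩ : ∃ l, (j : ℕ) = l + 1 := ⟨(j : ℕ) - 1, by omega⟩
      have hlm : l + 1 < m := by have := j.isLt; omega
      rw [sumIteSingle _ _ _ l (by omega) (fun k => by omega),
        sumIteSingle _ _ _ ((j : ℕ) + 1) (by omega) (fun k => by omega),
        sumIteZero _ _ (fun k => by omega),
        sumIteZero _ _ (fun k => by omega), hl]
      field_simp
      ring

noncomputable def evA (r i : ℕ) : ℝ := Real.pi * (2 * (i : ℝ) + 1) / (2 * (r : ℝ))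

noncomputable def evMu (r i : ℕ) : ℂ := ((2 * Real.cos (evA r i) : ℝ) : ℂ)

noncomputable def evOmega (r i : ℕ) : ℂ :=
  Complex.exp (Complex.I * ((((if Even i then (1 : ℝ) else -1) * evA r i) : ℝ) : ℂ))

lemma exp_I_of (x y : ℝ) (n : ℤ) (h : x = y + 2 * Real.pi * n) :
    Complex.exp (Complex.I * (x : ℂ)) = Complex.exp (Complex.I * (y : ℂ)) := by
  rw [Complex.exp_eq_exp_iff_exists_int]
  exact ⟨n, by rw [h]; push_cast; ring⟩

lemma evOmega_pow (r i : ℕ) (hr : 1 ≤ r) :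
    evOmega r i ^ r = Complex.exp (Complex.I * ((Real.pi / 2 : ℝ) : ℂ)) := by
  have hr' : (r : ℝ) ≠ 0 := by positivity
  rw [evOmega, ← Complex.exp_nat_mul]
  have hre : (r : ℂ) * (Complex.I * ((((if Even i then (1 : ℝ) else -1) * evA r i) : ℝ) : ℂ))
      = Complex.I * (((r : ℝ) * ((if Even i then (1 : ℝ) else -1) * evA r i) : ℝ) : ℂ) := by
    push_cast; ring
  rw [hre]
  rcases Nat.even_or_odd i with hi | hi
  · obtain ⟨k, hk⟩ := hi
    apply exp_I_of _ _ (k : ℤ)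
    rw [if_pos ⟨k, hk⟩, evA, hk]
    push_cast
    field_simp
    ring
  · obtain ⟨k, hk⟩ := hi
    apply exp_I_of _ _ (-(k + 1) : ℤ)
    rw [if_neg (by simp [hk, Nat.even_iff, Nat.odd_iff.mp ⟨k, hk⟩]), evA, hk]
    push_cast
    field_simp
    ring

lemma evOmega_add_inv (r i : ℕ) :
    evOmega r i + (evOmega r i)⁻¹ = evMu r i := by
  set e : ℝ := if Even i then (1 : ℝ) else -1 with he
  have hce : Real.cos (e * evA r i) = Real.cos (evA r i) := by
    rcases ite_eq_or_eq (Even i) (1 : ℝ) (-1) with h | h <;> rw [he, h]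
    · rw [one_mul]
    · rw [neg_one_mul, Real.cos_neg]
  rw [evOmega, ← Complex.exp_neg]
  have h1 : Complex.I * (((e * evA r i) : ℝ) : ℂ) = (((e * evA r i) : ℝ) : ℂ) * Complex.I := by
    ring
  rw [h1]
  have h2 : Complex.exp ((((e * evA r i) : ℝ) : ℂ) * Complex.I)
      + Complex.exp (-((((e * evA r i) : ℝ) : ℂ) * Complex.I))
      = 2 * Complex.cos (((e * evA r i) : ℝ) : ℂ) := by
    rw [Complex.cos]
    ring_nf
  rw [h2, ← Complex.ofReal_cos, hce, evMu]
  push_cast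
  ring

lemma evVec_hasEigenvector (r i : ℕ) (hr : 1 ≤ r) :
    Module.End.HasEigenvector (Matrix.toLin' (deltaMatrix r (Real.pi / 2))) (evMu r i)
      (fun j : Fin r => evOmega r i ^ (j : ℕ)) := by
  constructor
  · rw [Module.End.mem_eigenspace_iff, Matrix.toLin'_apply,
      delta_mulVec r hr _ _ (evOmega_pow r i hr), evOmega_add_inv]
  · intro h0
    have := congrFun h0 ⟨0, hr⟩
    simpa using this

lemma evA_mem (r i : ℕ) (hr : 1 ≤ r) (hi : i < r) :
    evA r i ∈ Set.Icc (0 : ℝ) Real.pi := by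
  have hπ := Real.pi_pos
  have hrpos : (0 : ℝ) < (r : ℝ) := by positivity
  constructor
  · rw [evA]; positivity
  · rw [evA, div_le_iff₀ (by positivity)]
    have h1 : (2 * (i : ℝ) + 1) ≤ 2 * (r : ℝ) := by
      have : (2 * i + 1 : ℕ) ≤ 2 * r := by omega
      exact_mod_cast this
    nlinarith

lemma evMu_inj (r : ℕ) (hr : 1 ≤ r) {i i' : ℕ} (hi : i < r) (hi' : i' < r)
    (h : evMu r i = evMu r i') : i = i' := by
  have hre : (2 * Real.cos (evA r i) : ℝ) = (2 * Real.cos (evA r i') : ℝ) := by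
    rw [evMu, evMu] at h
    exact_mod_cast h
  have hcos : Real.cos (evA r i) = Real.cos (evA r i') := by linarith
  have ha : evA r i = evA r i' :=
    Real.injOn_cos (evA_mem r i hr hi) (evA_mem r i' hr hi') hcos
  have hπ : Real.pi ≠ 0 := Real.pi_ne_zero
  have hr' : (r : ℝ) ≠ 0 := by positivity
  rw [evA, evA] at ha
  have hrpos : (0 : ℝ) < 2 * (r : ℝ) := by positivity
  have hπpos := Real.pi_pos
  rw [div_eq_div_iff (ne_of_gt hrpos) (ne_of_gt hrpos)] at ha
  have h2 := mul_right_cancel₀ (ne_of_gt hrpos) ha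
  have h3 := mul_left_cancel₀ (ne_of_gt hπpos) h2
  have : (i : ℝ) = i' := by linarith
  exact_mod_cast this

theorem spectrum_deltaMatrix_pi_div_two (r : ℕ) (hr : 1 ≤ r) :
    spectrum ℂ (deltaMatrix r (Real.pi / 2)) =
      {x : ℂ | ∃ j : ℕ, j ≤ 2 * r ∧ Odd j ∧
        x = (2 * Real.cos (Real.pi * j / (2 * r)) : ℝ)} ∧
    (∀ μ ∈ spectrum ℂ (deltaMatrix r (Real.pi / 2)),
      eigMult (deltaMatrix r (Real.pi / 2)) μ = 1) ∧
    (spectrum ℂ (deltaMatrix r (Real.pi / 2))).ncard = r := by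
  set M := deltaMatrix r (Real.pi / 2) with hM
  set T := Matrix.toLin' M with hT
  have hTalg : (Matrix.toLinAlgEquiv' M : (Fin r → ℂ) →ₗ[ℂ] (Fin r → ℂ)) = T :=
    LinearMap.ext fun v => by
      rw [hT, Matrix.toLinAlgEquiv'_apply, Matrix.toLin'_apply]
  have hspec : ∀ z : ℂ, z ∈ spectrum ℂ M ↔ Module.End.HasEigenvalue T z := by
    intro z
    rw [Module.End.hasEigenvalue_iff_mem_spectrum, ← hTalg,
      AlgEquiv.spectrum_eq (Matrix.toLinAlgEquiv') M]
  have hfr : Module.finrank ℂ (Fin r → ℂ) = r := Module.finrank_fin_fun ℂ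
  -- spectrum equals the set of evMu's
  have h1 : spectrum ℂ M = {x : ℂ | ∃ i, i < r ∧ x = evMu r i} := by
    ext z
    rw [hspec z]
    constructor
    · intro hz
      by_contra hne
      simp only [Set.mem_setOf_eq, not_exists, not_and] at hne
      obtain ⟨w0, hw0⟩ := hz.exists_hasEigenvector
      set g : Fin (r + 1) → ℂ := fun i => if h : (i : ℕ) < r then evMu r i else z with hg
      set w : Fin (r + 1) → (Fin r → ℂ) :=
        fun i => if h : (i : ℕ) < r then (fun j : Fin r => evOmega r i ^ (j : ℕ)) else w0 with hw
      have hginj : Function.Injective g := by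
        intro a b hab
        by_cases ha : (a : ℕ) < r <;> by_cases hb : (b : ℕ) < r <;>
          simp only [hg, dif_pos, dif_neg, ha, hb] at hab
        · exact Fin.ext (evMu_inj r hr ha hb hab)
        · exact absurd hab.symm (hne a ha)
        · exact absurd hab (hne b hb)
        · exact Fin.ext (by omega)
      have hev : ∀ i : Fin (r + 1), Module.End.HasEigenvector T (g i) (w i) := by
        intro i
        by_cases hi : (i : ℕ) < r
        · simp only [hg, hw, dif_pos hi]
          exact evVec_hasEigenvector r i hr
        · simp only [hg, hw, dif_neg hi]
          exact hw0
      have hli := Module.End.eigenvectors_linearIndependent' T g hginj w hev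
      have hcard := hli.fintype_card_le_finrank
      rw [hfr, Fintype.card_fin] at hcard
      omega
    · rintro ⟨i, hi, rfl⟩
      exact Module.End.hasEigenvalue_of_hasEigenvector (evVec_hasEigenvector r i hr)
  -- rewrite the target set
  have h2 : {x : ℂ | ∃ i, i < r ∧ x = evMu r i} =
      {x : ℂ | ∃ j : ℕ, j ≤ 2 * r ∧ Odd j ∧
        x = (2 * Real.cos (Real.pi * j / (2 * r)) : ℝ)} := by
    ext z
    simp only [Set.mem_setOf_eq]
    constructor
    · rintro ⟨i, hi, rfl⟩
      refine ⟨2 * i + 1, by omega, ⟨i, by ring⟩, ?_⟩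
      rw [evMu, evA]
      push_cast
      ring_nf
    · rintro ⟨j, hj, ⟨i, rfl⟩, rfl⟩
      refine ⟨i, by omega, ?_⟩
      rw [evMu, evA]
      push_cast
      ring_nf
  -- cardinality
  have h3 : spectrum ℂ M = ↑((Finset.range r).image (fun i => evMu r i)) := by
    rw [h1]
    ext z
    simp only [Set.mem_setOf_eq, Finset.coe_image, Set.mem_image, Finset.mem_coe,
      Finset.mem_range]
    constructor
    · rintro ⟨i, hi, rfl⟩; exact ⟨i, hi, rfl⟩
    · rintro ⟨i, hi, rfl⟩; exact ⟨i, hi, rfl⟩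
  refine ⟨h1.trans h2, ?_, ?_⟩
  · -- multiplicities
    intro μ hμ
    rw [h1] at hμ
    obtain ⟨i0, hi0, rfl⟩ := hμ
    have hev := evVec_hasEigenvector r i0 hr
    set s := Module.End.eigenspace T (evMu r i0) with hs
    set t := ⨆ (ν : ℂ) (_ : ν ≠ evMu r i0), Module.End.eigenspace T ν with ht2
    have hdisj : Disjoint s t := Module.End.eigenspaces_iSupIndep T (evMu r i0)
    have hpos : 0 < Module.finrank ℂ ↥s := by
      rw [Module.finrank_pos_iff]
      refine Submodule.nontrivial_iff_ne_bot.mpr ?_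
      intro hbot
      have h0 : (fun j : Fin r => evOmega r i0 ^ (j : ℕ)) ∈ s := hev.1
      rw [hbot, Submodule.mem_bot] at h0
      exact hev.2 h0
    -- t contains r-1 independent eigenvectors
    set i0f : Fin r := ⟨i0, hi0⟩ with hi0f
    have htmem : ∀ i : {i : Fin r // i ≠ i0f},
        (fun j : Fin r => evOmega r (i : Fin r) ^ (j : ℕ)) ∈ t := by
      intro i
      have hne : evMu r ((i : Fin r) : ℕ) ≠ evMu r i0 := by
        intro h
        exact i.2 (Fin.ext (evMu_inj r hr (i : Fin r).isLt hi0 h))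
      have hle : Module.End.eigenspace T (evMu r ((i : Fin r) : ℕ)) ≤ t :=
        le_iSup₂ (f := fun (ν : ℂ) (_ : ν ≠ evMu r i0) => Module.End.eigenspace T ν)
          (evMu r ((i : Fin r) : ℕ)) hne
      exact hle (evVec_hasEigenvector r ((i : Fin r) : ℕ) hr).1
    have hli : LinearIndependent ℂ
        (fun i : {i : Fin r // i ≠ i0f} => (fun j : Fin r => evOmega r (i : Fin r) ^ (j : ℕ))) := by
      apply Module.End.eigenvectors_linearIndependent' T
        (fun i : {i : Fin r // i ≠ i0f} => evMu r ((i : Fin r) : ℕ))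
      · intro a b hab
        exact Subtype.ext (Fin.ext (evMu_inj r hr (a : Fin r).isLt (b : Fin r).isLt hab))
      · intro i
        exact evVec_hasEigenvector r ((i : Fin r) : ℕ) hr
    have hli' : LinearIndependent ℂ
        (fun i : {i : Fin r // i ≠ i0f} =>
          (⟨(fun j : Fin r => evOmega r (i : Fin r) ^ (j : ℕ)), htmem i⟩ : ↥t)) := by
      apply LinearIndependent.of_comp t.subtype
      exact hli
    have hcard1 := hli'.fintype_card_le_finrank
    have hcard2 : Fintype.card {i : Fin r // i ≠ i0f} = r - 1 := by
      rw [Fintype.card_subtype_compl, Fintype.card_fin, Fintype.card_subtype_eq]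
    rw [hcard2] at hcard1
    have hsum := Submodule.finrank_sup_add_finrank_inf_eq s t
    rw [hdisj.eq_bot, finrank_bot, add_zero] at hsum
    have hle : Module.finrank ℂ ↥(s ⊔ t) ≤ r := by
      have := Submodule.finrank_le (s ⊔ t)
      rwa [hfr] at this
    have : Module.finrank ℂ ↥s = 1 := by omega
    exact this
  · rw [h3, Set.ncard_coe_finset, Finset.card_image_of_injOn, Finset.card_range]
    intro a ha b hb hab
    exact evMu_inj r hr (Finset.mem_range.mp ha) (Finset.mem_range.mp hb) hab
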